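/- Let k ≥ 2 be an integer and let a : ℕ₀ → ℂ be a multiplicative k-automatic sequence such that there exists a threshold p₀ with a(p^α) ≠ 0 for every prime p ≥ p₀ and every α ∈ ℕ. Then there exists a threshold p₂ such that for every prime p ≥ p₂ and every α ∈ ℕ one has a(p^α) = a(p)^α ≠ 0. -/

import Mathlib

open scoped BigOperators

namespace MultAuto

/-- Base-`k` value of a word over `Σ_k` (most significant digit first); `[ε]_k = 0`. -/
def valk (k : ℕ) (u : List ℕ) : ℕ := u.foldl (fun acc d => k * acc + d) 0

/-- `u` is a word over the alphabet `Σ_k = {0,…,k-1}`. -/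
def IsWord (k : ℕ) (u : List ℕ) : Prop := ∀ d ∈ u, d < k

/-- `u` has no leading zeros (the empty word qualifies). -/
def NoLeadZero : List ℕ → Prop
  | [] => True
  | d :: _ => d ≠ 0

/-- `wpow v l` is the `l`-fold concatenation `v^l`. -/
def wpow (v : List ℕ) (l : ℕ) : List ℕ := (List.replicate l v).flatten

/-- Transition function of a word: `δ_{uv} = δ_u ∘ δ_v`. -/
def deltaW {S : Type*} (δ : ℕ → S → S) : List ℕ → S → S
  | [] => id
  | d :: t => δ d ∘ deltaW δ t

/-- `a : ℕ → ℂ` is a `k`-automatic sequence. -/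
def IsAutomatic (k : ℕ) (a : ℕ → ℂ) : Prop :=
  ∃ (S : Type) (_ : Fintype S) (s₀ : S) (δ : ℕ → S → S) (τ : S → ℂ),
    ∀ u : List ℕ, IsWord k u → NoLeadZero u → a (valk k u) = τ (deltaW δ u s₀)

/-- `a` is multiplicative: `a (m n) = a m * a n` for coprime positive `m, n`. -/
def IsMult (a : ℕ → ℂ) : Prop :=
  ∀ m n : ℕ, 0 < m → 0 < n → Nat.Coprime m n → a (m * n) = a m * a n

/-- The word `u_r v_r^{l_r} u_{r-1} ⋯ u_1 v_1^{l_1} u_0`. -/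
def aridWord (u v : ℕ → List ℕ) (l : ℕ → ℕ) : ℕ → List ℕ
  | 0 => u 0
  | r + 1 => u (r + 1) ++ wpow (v (r + 1)) (l (r + 1)) ++ aridWord u v l r

/-- `A` is a basic arid set of rank ≤ r in base k. -/
def BasicArid (k r : ℕ) (A : Set ℕ) : Prop :=
  ∃ u v : ℕ → List ℕ, (∀ i, IsWord k (u i)) ∧ (∀ i, IsWord k (v i)) ∧
    A = {n | ∃ l : ℕ → ℕ, n = valk k (aridWord u v l r)}

/-- `A` is an arid set of rank ≤ r: a finite union of basic arid sets of rank ≤ r. -/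
def AridOfRank (k r : ℕ) (A : Set ℕ) : Prop :=
  ∃ (m : ℕ) (B : Fin m → Set ℕ), (∀ j, BasicArid k r (B j)) ∧ A = ⋃ j, B j

/-- `A` is arid (in base `k`). -/
def Arid (k : ℕ) (A : Set ℕ) : Prop := ∃ r, AridOfRank k r A

/-- `χ : ℕ → ℂ` is a Dirichlet character of modulus `m`: completely multiplicative,
`m`-periodic, and nonvanishing exactly at integers coprime to `m`. -/
def IsDirichletLike (m : ℕ) (χ : ℕ → ℂ) : Prop :=
  0 < m ∧ (∀ a b : ℕ, 0 < a → 0 < b → χ (a * b) = χ a * χ b) ∧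
  (∀ n : ℕ, 0 < n → χ (n + m) = χ n) ∧
  (∀ n : ℕ, 0 < n → (χ n ≠ 0 ↔ Nat.Coprime n m))

/-- `(n)_k^l`: the last `l` base-`k` digits of `n`, padded with leading zeros,
most significant digit first. -/
def padk (k l n : ℕ) : List ℕ := (List.range l).reverse.map fun i => n / k ^ i % k

/-- The equivalence `n₁ ∼ n₂` on `ℕ` induced by the transition maps `δ`. -/
def EqvN (k : ℕ) {S : Type*} (δ : ℕ → S → S) (n₁ n₂ : ℕ) : Prop :=
  ∃ l₀ : ℕ, ∀ l ≥ l₀, deltaW δ (padk k l n₁) = deltaW δ (padk k l n₂)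

/-- `E ⊆ ℕ` has upper Banach density zero. -/
def UpperBanachDensityZero (E : Set ℕ) : Prop :=
  ∀ ε : ℝ, 0 < ε → ∃ N₀ : ℕ, ∀ N ≥ N₀, ∀ M : ℕ,
    ((E ∩ Set.Ico M (M + N)).ncard : ℝ) ≤ ε * N

/-! ### Auxiliary development -/

/-- geometric-type number `∑_{i<n} k^(B i)` -/
def V (k B n : ℕ) : ℕ := ∑ i ∈ Finset.range n, k ^ (B * i)

/-- block word `0^(B-1) 1` -/
def blockW (B : ℕ) : List ℕ := List.replicate (B - 1) 0 ++ [1]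

/-- word `1 (0^(B-1) 1)^n`, whose value is `V k B (n+1)` -/
def wordW (B n : ℕ) : List ℕ := 1 :: (List.replicate n (blockW B)).flatten

lemma valk_foldl (k : ℕ) (u : List ℕ) (acc : ℕ) :
    u.foldl (fun a d => k * a + d) acc = acc * k ^ u.length + valk k u := by
  induction u generalizing acc with
  | nil => simp [valk]
  | cons d t ih =>
    show t.foldl _ (k * acc + d) = _
    rw [ih (k * acc + d)]
    have : valk k (d :: t) = d * k ^ t.length + valk k t := by
      show t.foldl _ (k * 0 + d) = _
      rw [ih (k * 0 + d)]; ring_nf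
    rw [this]
    simp [List.length_cons, pow_succ]
    ring

lemma valk_append (k : ℕ) (u w : List ℕ) :
    valk k (u ++ w) = valk k u * k ^ w.length + valk k w := by
  unfold valk
  rw [List.foldl_append, valk_foldl]
  rfl

lemma valk_single (k d : ℕ) : valk k [d] = d := by
  simp [valk]

lemma valk_replicate_zero (k j : ℕ) : valk k (List.replicate j 0) = 0 := by
  induction j with
  | zero => simp [valk]
  | succ n ih =>
    rw [List.replicate_succ]
    show valk k ([0] ++ List.replicate n 0) = 0
    rw [valk_append, ih, valk_single]; ring

lemma valk_blockW (k B : ℕ) : valk k (blockW B) = 1 := by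
  unfold blockW
  rw [valk_append, valk_replicate_zero, valk_single]
  simp

lemma blockW_length (B : ℕ) (hB : 1 ≤ B) : (blockW B).length = B := by
  simp [blockW]; omega

lemma wordW_succ (B n : ℕ) : wordW B (n + 1) = wordW B n ++ blockW B := by
  unfold wordW
  rw [List.replicate_succ', List.flatten_append]
  simp

lemma V_succ (k B n : ℕ) : V k B (n + 1) = V k B n * k ^ B + 1 := by
  unfold V
  rw [Finset.sum_range_succ', Finset.sum_mul]
  simp only [mul_zero, pow_zero]
  congr 1
  refine Finset.sum_congr rfl fun i _ => ?_
  rw [mul_add, mul_one, pow_add]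

lemma valk_wordW (k B n : ℕ) (hB : 1 ≤ B) : valk k (wordW B n) = V k B (n + 1) := by
  induction n with
  | zero =>
    show valk k [1] = V k B 1
    rw [valk_single]
    simp [V]
  | succ n ih =>
    rw [wordW_succ, valk_append, ih, valk_blockW, blockW_length B hB,
      V_succ k B (n + 1)]

lemma isWord_wordW (k B n : ℕ) (hk : 2 ≤ k) : IsWord k (wordW B n) := by
  intro d hd
  unfold wordW at hd
  rcases List.mem_cons.mp hd with h | h
  · omega
  · rcases List.mem_flatten.mp h with ⟨l, hl, hdl⟩
    rw [List.mem_replicate] at hl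
    rw [hl.2] at hdl
    unfold blockW at hdl
    rcases List.mem_append.mp hdl with h' | h'
    · rw [List.mem_replicate] at h'; omega
    · simp at h'; omega

lemma noLeadZero_wordW (B n : ℕ) : NoLeadZero (wordW B n) := by
  show (1 : ℕ) ≠ 0
  omega

lemma deltaW_append {S : Type*} (δ : ℕ → S → S) (u w : List ℕ) :
    deltaW δ (u ++ w) = deltaW δ u ∘ deltaW δ w := by
  induction u with
  | nil => rfl
  | cons d t ih =>
    show deltaW δ (d :: (t ++ w)) = _
    rw [deltaW, ih]
    rfl

lemma deltaW_replicate_zero {S : Type*} (δ : ℕ → S → S) (j : ℕ) :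
    deltaW δ (List.replicate j 0) = (δ 0)^[j] := by
  induction j with
  | zero => rfl
  | succ n ih =>
    rw [List.replicate_succ, deltaW, ih, Function.iterate_succ']

lemma deltaW_blockW {S : Type*} (δ : ℕ → S → S) (B : ℕ) :
    deltaW δ (blockW B) = (δ 0)^[B - 1] ∘ (δ 1 ∘ id) := by
  unfold blockW
  rw [deltaW_append, deltaW_replicate_zero]
  rfl

lemma deltaW_wordW {S : Type*} (δ : ℕ → S → S) (B n : ℕ) :
    deltaW δ (wordW B n) = (δ 1 ∘ id) ∘ (deltaW δ (blockW B))^[n] := by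
  induction n with
  | zero => rfl
  | succ n ih =>
    rw [wordW_succ, deltaW_append, ih, Function.iterate_succ]
    rfl

/-! ### Periodicity of iterates -/

lemma exists_period (S : Type) [Fintype S] :
    ∃ N T : ℕ, 0 < T ∧ ∀ f : S → S, ∀ n, N ≤ n → f^[n + T] = f^[n] := by
  classical
  set C := Fintype.card (S → S) with hC
  refine ⟨C, Nat.factorial C, Nat.factorial_pos C, ?_⟩
  intro f n hn
  have main : ∀ i j : ℕ, i < j → j ≤ C → f^[i] = f^[j] →
      f^[n + Nat.factorial C] = f^[n] := by
    intro i j hlt hjC hij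
    set d := j - i with hd
    have hd1 : 1 ≤ d := by omega
    have hstep : ∀ m, i ≤ m → f^[m + d] = f^[m] := by
      intro m hm
      have h1 : m + d = (m - i) + j := by omega
      have h2 : m = (m - i) + i := by omega
      rw [h1, Function.iterate_add, ← hij, ← Function.iterate_add, ← h2]
    have hrep : ∀ s m, i ≤ m → f^[m + d * s] = f^[m] := by
      intro s
      induction s with
      | zero => intro m _; simp
      | succ s ihs =>
        intro m hm
        have h3 : m + d * (s + 1) = (m + d * s) + d := by ring
        rw [h3, hstep _ (by omega), ihs m hm]
    obtain ⟨s, hs⟩ : d ∣ Nat.factorial C := Nat.dvd_factorial (by omega) (by omega)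
    rw [hs, hrep s n (by omega)]
  obtain ⟨i, j, hne, hij⟩ := Fintype.exists_ne_map_eq_of_card_lt
    (fun i : Fin (C + 1) => f^[(i : ℕ)]) (by rw [Fintype.card_fin]; omega)
  have hiC : (i : ℕ) ≤ C := by have := i.isLt; omega
  have hjC : (j : ℕ) ≤ C := by have := j.isLt; omega
  rcases Nat.lt_trichotomy (i : ℕ) (j : ℕ) with hlt | heq | hlt
  · exact main i j hlt hjC hij
  · exact absurd (Fin.ext heq) hne
  · exact main j i hlt hiC hij.symm

lemma iterate_congr {S : Type*} (f : S → S) {N T m n : ℕ}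
    (hper : ∀ n, N ≤ n → f^[n + T] = f^[n]) (h : m ≡ n [MOD T])
    (hm : N ≤ m) (hn : N ≤ n) : f^[m] = f^[n] := by
  have key : ∀ m n : ℕ, N ≤ m → m ≤ n → m ≡ n [MOD T] → f^[m] = f^[n] := by
    intro m n hm hmn hcong
    obtain ⟨s, hs⟩ := (Nat.modEq_iff_dvd' hmn).mp hcong
    have hn' : n = m + T * s := by omega
    have hrep : ∀ s : ℕ, f^[m + T * s] = f^[m] := by
      intro s
      induction s with
      | zero => simp
      | succ s ihs =>
        have h3 : m + T * (s + 1) = (m + T * s) + T := by ring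
        rw [h3, hper _ (by omega), ihs]
    rw [hn']
    exact (hrep s).symm
  rcases le_total m n with h' | h'
  · exact key m n hm h' h
  · exact (key n m hn h' h.symm).symm

/-! ### Number theory for V -/

lemma V_pos {k B n : ℕ} (hk : 1 ≤ k) (hn : 1 ≤ n) : 0 < V k B n := by
  unfold V
  apply Finset.sum_pos
  · intro i _
    exact Nat.pow_pos hk
  · exact Finset.nonempty_range_iff.mpr (by omega)

lemma V_mul_geom (k B n : ℕ) :
    (V k B n : ℤ) * ((k : ℤ) ^ B - 1) = (k : ℤ) ^ (B * n) - 1 := by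
  have : ((V k B n : ℕ) : ℤ) = ∑ i ∈ Finset.range n, ((k : ℤ) ^ B) ^ i := by
    unfold V
    push_cast
    refine Finset.sum_congr rfl fun i _ => ?_
    rw [← pow_mul]
  rw [this, geom_sum_mul, ← pow_mul]

lemma V_dvd (k B n : ℕ) (hk : 1 ≤ k) : V k B n ∣ k ^ (B * n) - 1 := by
  have h := V_mul_geom k B n
  have h1 : ((k ^ (B * n) - 1 : ℕ) : ℤ) = (k : ℤ) ^ (B * n) - 1 := by
    have : 1 ≤ k ^ (B * n) := Nat.one_le_pow _ _ (by omega)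
    push_cast [this]
    ring
  rw [← Int.natCast_dvd_natCast, h1, ← h]
  exact Dvd.intro _ rfl

lemma V_mul {k : ℕ} (hk : 2 ≤ k) (B : ℕ) (hB : 1 ≤ B) (n' n : ℕ) :
    V k B (n' * n) = V k B n' * V k (B * n') n := by
  have hk1 : (1 : ℤ) < (k : ℤ) := by exact_mod_cast hk
  have hz : ((k : ℤ) ^ B - 1) ≠ 0 :=
    sub_ne_zero.mpr (ne_of_gt (one_lt_pow₀ hk1 (by omega)))
  have key : ((V k B (n' * n) : ℕ) : ℤ) = ((V k B n' * V k (B * n') n : ℕ) : ℤ) := by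
    apply mul_right_cancel₀ hz
    rw [V_mul_geom]
    push_cast
    have h3 := V_mul_geom k (B * n') n
    have h2 := V_mul_geom k B n'
    have hassoc : B * (n' * n) = (B * n') * n := by ring
    rw [hassoc]
    rw [← h3, ← h2]
    ring
  exact_mod_cast key

lemma cast_pow_sub_one_eq_zero_iff (q k E : ℕ) (hq : 1 ≤ q) (hk : 1 ≤ k) :
    q ∣ k ^ E - 1 ↔ ((k : ZMod q)) ^ E = 1 := by
  have h1 : 1 ≤ k ^ E := Nat.one_le_pow _ _ (by omega)
  rw [← ZMod.natCast_eq_zero_iff]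
  rw [Nat.cast_sub h1]
  push_cast
  constructor
  · intro h
    have := sub_eq_zero.mp h
    exact this
  · intro h
    rw [h]
    ring

lemma dvd_V_iff {q k B : ℕ} (hq : 1 ≤ q) (hk : 1 ≤ k) (hd : q ∣ k ^ B - 1) (n : ℕ) :
    q ∣ V k B n ↔ q ∣ n := by
  have hkB : ((k : ZMod q)) ^ B = 1 := (cast_pow_sub_one_eq_zero_iff q k B hq hk).mp hd
  have hV : ((V k B n : ℕ) : ZMod q) = (n : ZMod q) := by
    unfold V
    push_cast
    have : ∀ i ∈ Finset.range n, ((k : ZMod q)) ^ (B * i) = 1 := by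
      intro i _
      rw [pow_mul, hkB, one_pow]
    rw [Finset.sum_congr rfl this]
    simp
  rw [← ZMod.natCast_eq_zero_iff, hV, ZMod.natCast_eq_zero_iff]

lemma one_add_mul_pow_zmod {R : Type*} [CommRing R] (x : R) (hx : x * x = 0) (i : ℕ) :
    (1 + x) ^ i = 1 + (i : R) * x := by
  induction i with
  | zero => simp
  | succ i ih =>
    rw [pow_succ, ih]
    have hexp : (1 + (i : R) * x) * (1 + x) = 1 + ((i : R) * x + x) + (i : R) * (x * x) := by
      ring
    rw [hexp, hx, mul_zero, add_zero]
    push_cast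
    ring

lemma V_p_mod_sq {k p B : ℕ} (hp : p.Prime) (hodd : p ≠ 2) (hk : 2 ≤ k) (hB : 1 ≤ B)
    (hd : p ∣ k ^ B - 1) : ((V k B p : ℕ) : ZMod (p ^ 2)) = (p : ZMod (p ^ 2)) := by
  obtain ⟨c, hc⟩ := hd
  have hkB : k ^ B = 1 + p * c := by
    have : 1 ≤ k ^ B := Nat.one_le_pow _ _ (by omega)
    omega
  have hx : ((p : ZMod (p ^ 2)) * c) * ((p : ZMod (p ^ 2)) * c) = 0 := by
    have hpp : ((p : ZMod (p ^ 2)) * (p : ZMod (p ^ 2))) = 0 := by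
      have : (((p * p : ℕ)) : ZMod (p ^ 2)) = 0 := by
        rw [ZMod.natCast_eq_zero_iff]
        rw [pow_two]
      push_cast at this
      exact this
    calc (p : ZMod (p ^ 2)) * c * ((p : ZMod (p ^ 2)) * c)
        = ((p : ZMod (p ^ 2)) * (p : ZMod (p ^ 2))) * (c * c) := by ring
    _ = 0 := by rw [hpp, zero_mul]
  have hsum : ((V k B p : ℕ) : ZMod (p ^ 2))
      = ∑ i ∈ Finset.range p, (1 + ((i : ℕ) : ZMod (p ^ 2)) * ((p : ZMod (p ^ 2)) * c)) := by
    unfold V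
    push_cast
    refine Finset.sum_congr rfl fun i _ => ?_
    rw [pow_mul]
    have : ((k : ZMod (p ^ 2))) ^ B = 1 + (p : ZMod (p ^ 2)) * c := by
      have := congrArg (fun t : ℕ => ((t : ℕ) : ZMod (p ^ 2))) hkB
      push_cast at this
      exact this
    rw [this, one_add_mul_pow_zmod _ hx i]
  rw [hsum]
  rw [Finset.sum_add_distrib]
  simp only [Finset.sum_const, Finset.card_range, nsmul_eq_mul, mul_one]
  have hgauss : ∑ i ∈ Finset.range p, ((i : ℕ) : ZMod (p ^ 2)) * ((p : ZMod (p ^ 2)) * c) = 0 := by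
    rw [← Finset.sum_mul]
    have hsum2 : (∑ i ∈ Finset.range p, ((i : ℕ) : ZMod (p ^ 2)))
        = (((p * ((p - 1) / 2) : ℕ)) : ZMod (p ^ 2)) := by
      have h2 : (∑ i ∈ Finset.range p, i) = p * ((p - 1) / 2) := by
        have hodd' : (p - 1) % 2 = 0 := by
          have := hp.two_le
          rcases Nat.even_or_odd p with he | ho
          · exfalso
            have : p = 2 := (Nat.Prime.even_iff hp).mp he
            omega
          · obtain ⟨t, ht⟩ := ho
            omega
        have hg := Finset.sum_range_id_mul_two p
        set t := (p - 1) / 2 with ht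
        have h2t : p - 1 = 2 * t := by omega
        rw [h2t] at hg
        have hlink : p * (2 * t) = (p * t) * 2 := by ring
        omega
      rw [← h2]
      push_cast
      rfl
    rw [hsum2]
    have : (((p * ((p - 1) / 2) : ℕ)) : ZMod (p ^ 2)) * ((p : ZMod (p ^ 2)) * c) = 0 := by
      push_cast
      have hpp : ((p : ZMod (p ^ 2)) * (p : ZMod (p ^ 2))) = 0 := by
        have h0 : (((p * p : ℕ)) : ZMod (p ^ 2)) = 0 := by
          rw [ZMod.natCast_eq_zero_iff, pow_two]
        push_cast at h0
        exact h0
      calc ((p : ZMod (p^2)) * ((p - 1 : ℕ) / 2 : ℕ)) * ((p : ZMod (p^2)) * c)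
          = ((p : ZMod (p^2)) * (p : ZMod (p^2))) * (((p - 1 : ℕ) / 2 : ℕ) * c) := by ring
      _ = 0 := by rw [hpp, zero_mul]
    exact this
  rw [hgauss, add_zero]

lemma exists_phi {k p B : ℕ} (hp : p.Prime) (hodd : p ≠ 2) (hk : 2 ≤ k) (hB : 1 ≤ B)
    (hd : p ∣ k ^ B - 1) :
    ∃ φ : ℕ, V k B p = p * φ ∧ ¬ p ∣ φ := by
  have hp1 : 1 ≤ p := hp.pos
  have hpV : p ∣ V k B p := (dvd_V_iff hp1 (by omega) hd p).mpr dvd_rfl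
  obtain ⟨φ, hφ⟩ := hpV
  refine ⟨φ, hφ, ?_⟩
  intro hcon
  obtain ⟨ψ, hψ⟩ := hcon
  have hV2 : (p : ℕ) ^ 2 ∣ V k B p := by
    rw [hφ, hψ, pow_two]
    exact ⟨ψ, by ring⟩
  have h0 : ((V k B p : ℕ) : ZMod (p ^ 2)) = 0 :=
    (ZMod.natCast_eq_zero_iff _ _).mpr hV2
  rw [V_p_mod_sq hp hodd hk hB hd] at h0
  have : (p : ℕ) ^ 2 ∣ p := (ZMod.natCast_eq_zero_iff _ _).mp h0
  have hle := Nat.le_of_dvd hp.pos this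
  have : p < p ^ 2 := by nlinarith [hp.two_le]
  omega

/-! ### small prime analysis -/

lemma M_pos {p p₀ M : ℕ} (hp : p.Prime) (hM : Nat.Coprime M (p * Nat.factorial p₀)) :
    1 ≤ M := by
  rcases Nat.eq_zero_or_pos M with h0 | h1
  · exfalso
    rw [h0] at hM
    have h2 : p * Nat.factorial p₀ = 1 := by simpa [Nat.Coprime] using hM
    have hpf : 1 ≤ Nat.factorial p₀ := Nat.one_le_iff_ne_zero.mpr (Nat.factorial_ne_zero p₀)
    nlinarith [hp.two_le]
  · exact h1

lemma small_prime_dvd {k p p₀ e M q J : ℕ} (hk : 2 ≤ k) (hp : p.Prime) (hp0 : p₀ ≤ p)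
    (he : 1 ≤ e) (hq : q.Prime) (hq0 : q < p₀)
    (hM : Nat.Coprime M (p * Nat.factorial p₀))
    (hdvd : q ∣ k ^ (e * (p ^ J * M)) - 1) : q ∣ k ^ e - 1 := by
  have hM1 : 1 ≤ M := M_pos hp hM
  have hpJ1 : 1 ≤ p ^ J := Nat.one_le_pow _ _ hp.pos
  have hE1 : 1 ≤ e * (p ^ J * M) := Nat.mul_pos he (Nat.mul_pos hpJ1 hM1)
  have hqk : ¬ q ∣ k := by
    intro hcon
    have h1 : q ∣ k ^ (e * (p ^ J * M)) := dvd_pow hcon (by omega)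
    have h2 : 1 ≤ k ^ (e * (p ^ J * M)) := Nat.one_le_pow _ _ (by omega)
    have h3 : q ∣ k ^ (e * (p ^ J * M)) - (k ^ (e * (p ^ J * M)) - 1) :=
      Nat.dvd_sub h1 hdvd
    have h4 : k ^ (e * (p ^ J * M)) - (k ^ (e * (p ^ J * M)) - 1) = 1 := by omega
    rw [h4] at h3
    have := Nat.dvd_one.mp h3
    have := hq.one_lt
    omega
  haveI : Fact q.Prime := ⟨hq⟩
  have hk0 : (k : ZMod q) ≠ 0 := by
    rw [Ne, ZMod.natCast_eq_zero_iff]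
    exact hqk
  set d := orderOf ((k : ZMod q)) with hd
  have hdE : d ∣ e * (p ^ J * M) := orderOf_dvd_iff_pow_eq_one.mpr
    ((cast_pow_sub_one_eq_zero_iff q k _ hq.pos (by omega)).mp hdvd)
  have hdq : d ∣ q - 1 := orderOf_dvd_of_pow_eq_one (ZMod.pow_card_sub_one_eq_one hk0)
  have hq2 := hq.two_le
  have hd1 : 1 ≤ d := by
    rcases Nat.eq_zero_or_pos d with h0 | h1
    · exfalso
      rw [h0] at hdq
      have := Nat.eq_zero_of_zero_dvd hdq
      omega
    · exact h1
  have hdle : d ≤ q - 1 := Nat.le_of_dvd (by omega) hdq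
  have hdfac : d ∣ Nat.factorial p₀ :=
    dvd_trans hdq (Nat.dvd_factorial (by omega) (by omega))
  have hMfac : Nat.Coprime M (Nat.factorial p₀) :=
    Nat.Coprime.coprime_dvd_right (dvd_mul_left _ p) hM
  have hdM : Nat.Coprime d M := (Nat.Coprime.coprime_dvd_right hdfac hMfac).symm
  have hdp : ¬ p ∣ d := by
    intro hcon
    have := Nat.le_of_dvd (by omega) hcon
    omega
  have hdpJ : Nat.Coprime d (p ^ J) :=
    Nat.Coprime.pow_right J (Nat.coprime_comm.mp ((Nat.Prime.coprime_iff_not_dvd hp).mpr hdp))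
  have hre : e * (p ^ J * M) = (e * p ^ J) * M := by ring
  rw [hre] at hdE
  have hdeJ : d ∣ e * p ^ J := (Nat.Coprime.dvd_of_dvd_mul_right hdM) hdE
  have hde : d ∣ e := (Nat.Coprime.dvd_of_dvd_mul_right hdpJ) hdeJ
  exact (cast_pow_sub_one_eq_zero_iff q k e hq.pos (by omega)).mpr
    (orderOf_dvd_iff_pow_eq_one.mp hde)

lemma pow_sub_one_dvd_pow_mul_sub_one (k e t : ℕ) : k ^ e - 1 ∣ k ^ (e * t) - 1 := by
  have h := Nat.sub_dvd_pow_sub_pow (k ^ e) 1 t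
  rw [one_pow, ← pow_mul] at h
  exact h

lemma phi_good {k p p₀ e M : ℕ} (hk : 2 ≤ k) (hp : p.Prime) (hp0 : p₀ ≤ p) (hpk : k < p)
    (hodd : p ≠ 2) (he : 1 ≤ e) (hpe : p ∣ k ^ e - 1)
    (hM : Nat.Coprime M (p * Nat.factorial p₀)) (j : ℕ) :
    ∃ φ : ℕ, V k (e * (p ^ j * M)) p = p * φ ∧ ¬ p ∣ φ ∧
      ∀ q : ℕ, q.Prime → q ∣ φ → p₀ ≤ q := by
  have hM1 : 1 ≤ M := M_pos hp hM
  have hpJ1 : 1 ≤ p ^ j := Nat.one_le_pow _ _ hp.pos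
  set B := e * (p ^ j * M) with hB
  have hB1 : 1 ≤ B := Nat.mul_pos he (Nat.mul_pos hpJ1 hM1)
  have hpB : p ∣ k ^ B - 1 :=
    dvd_trans hpe (pow_sub_one_dvd_pow_mul_sub_one k e (p ^ j * M))
  obtain ⟨φ, hφ, hpφ⟩ := exists_phi hp hodd hk hB1 hpB
  refine ⟨φ, hφ, hpφ, ?_⟩
  intro q hq hqφ
  by_contra hq0
  push_neg at hq0
  have hφV : φ ∣ V k B p := ⟨p, by rw [hφ]; ring⟩
  have hqV : q ∣ V k B p := dvd_trans hqφ hφV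
  have hqbig : q ∣ k ^ (B * p) - 1 := dvd_trans hqV (V_dvd k B p (by omega))
  have hBp : B * p = e * (p ^ (j + 1) * M) := by rw [hB]; ring
  rw [hBp] at hqbig
  have hqe : q ∣ k ^ e - 1 :=
    small_prime_dvd hk hp hp0 he hq hq0 hM hqbig
  have hqB : q ∣ k ^ B - 1 :=
    dvd_trans hqe (pow_sub_one_dvd_pow_mul_sub_one k e (p ^ j * M))
  have hqp : q ∣ p := (dvd_V_iff hq.pos (by omega) hqB p).mp hqV
  have : q = p := (Nat.prime_dvd_prime_iff_eq hq hp).mp hqp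
  omega

lemma exists_u {k p p₀ e M : ℕ} (hk : 2 ≤ k) (hp : p.Prime) (hp0 : p₀ ≤ p) (hpk : k < p)
    (hodd : p ≠ 2) (he : 1 ≤ e) (hpe : p ∣ k ^ e - 1)
    (hM : Nat.Coprime M (p * Nat.factorial p₀)) :
    ∀ j : ℕ, ∃ u : ℕ, V k e (p ^ j * M) = p ^ j * u ∧ ¬ p ∣ u ∧
      ∀ q : ℕ, q.Prime → q ∣ u → p₀ ≤ q := by
  have hM1 : 1 ≤ M := M_pos hp hM
  intro j
  induction j with
  | zero =>
    refine ⟨V k e M, by simp, ?_, ?_⟩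
    · intro hcon
      have hpM : p ∣ M := (dvd_V_iff hp.pos (by omega) hpe M).mp hcon
      have hcopMp : Nat.Coprime M p := Nat.Coprime.coprime_dvd_right (dvd_mul_right p _) hM
      have hd1 : p ∣ 1 := hcopMp ▸ Nat.dvd_gcd hpM dvd_rfl
      have := hp.one_lt
      have := Nat.dvd_one.mp hd1
      omega
    · intro q hq hqV
      by_contra hq0
      push_neg at hq0
      have hqbig : q ∣ k ^ (e * M) - 1 := dvd_trans hqV (V_dvd k e M (by omega))
      have harg : e * M = e * (p ^ 0 * M) := by ring
      rw [harg] at hqbig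
      have hqe : q ∣ k ^ e - 1 := small_prime_dvd hk hp hp0 he hq hq0 hM hqbig
      have hqM : q ∣ M := (dvd_V_iff hq.pos (by omega) hqe M).mp hqV
      have hqD : q ∣ p * Nat.factorial p₀ :=
        dvd_trans (Nat.dvd_factorial hq.pos (by omega)) (dvd_mul_left _ p)
      have hd1 : q ∣ 1 := hM ▸ Nat.dvd_gcd hqM hqD
      have := hq.one_lt
      have := Nat.dvd_one.mp hd1
      omega
  | succ j ih =>
    obtain ⟨u, hu, hpu, hGu⟩ := ih
    obtain ⟨φ, hφ, hpφ, hGφ⟩ := phi_good hk hp hp0 hpk hodd he hpe hM j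
    refine ⟨u * φ, ?_, ?_, ?_⟩
    · have harg : p ^ (j + 1) * M = (p ^ j * M) * p := by ring
      rw [harg, V_mul hk e he, hu, hφ]
      ring
    · intro hcon
      rcases (Nat.Prime.dvd_mul hp).mp hcon with h | h
      · exact hpu h
      · exact hpφ h
    · intro q hq hqd
      rcases (Nat.Prime.dvd_mul hq).mp hqd with h | h
      · exact hGu q hq h
      · exact hGφ q hq h

lemma coprime_u_phi {k p e M u φ : ℕ} (hk : 2 ≤ k) (hp : p.Prime) (he : 1 ≤ e) (j : ℕ)
    (hu : V k e (p ^ j * M) = p ^ j * u) (hφ : V k (e * (p ^ j * M)) p = p * φ)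
    (hpu : ¬ p ∣ u) : Nat.Coprime u φ := by
  by_contra hcop
  obtain ⟨q, hq, hqu, hqφ⟩ := Nat.Prime.not_coprime_iff_dvd.mp hcop
  set B := e * (p ^ j * M) with hB
  have huV : u ∣ V k e (p ^ j * M) := ⟨p ^ j, by rw [hu]; ring⟩
  have hqB : q ∣ k ^ B - 1 :=
    dvd_trans hqu (dvd_trans huV (V_dvd k e (p ^ j * M) (by omega)))
  have hφV : φ ∣ V k B p := ⟨p, by rw [hφ]; ring⟩
  have hqp : q ∣ p := (dvd_V_iff hq.pos (by omega) hqB p).mp (dvd_trans hqφ hφV)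
  have : q = p := (Nat.prime_dvd_prime_iff_eq hq hp).mp hqp
  rw [this] at hqu
  exact hpu hqu

/-! ### nonvanishing from multiplicativity -/

lemma a_ne_zero_of_good {a : ℕ → ℂ} {p₀ : ℕ} (hmul : IsMult a) (ha1 : a 1 = 1)
    (hdense : ∀ q : ℕ, q.Prime → p₀ ≤ q → ∀ b : ℕ, 0 < b → a (q ^ b) ≠ 0) :
    ∀ u : ℕ, 0 < u → (∀ q : ℕ, q.Prime → q ∣ u → p₀ ≤ q) → a u ≠ 0 := by
  intro u
  induction u using Nat.strong_induction_on with
  | _ u IH =>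
    intro hu hgood
    rcases eq_or_lt_of_le (show 1 ≤ u from hu) with h1 | h1
    · rw [← h1, ha1]
      exact one_ne_zero
    · -- u ≥ 2
      have hune : u ≠ 1 := by omega
      set q := u.minFac with hqdef
      have hq : q.Prime := Nat.minFac_prime hune
      have hqd : q ∣ u := Nat.minFac_dvd u
      have hβ : 0 < u.factorization q := hq.factorization_pos_of_dvd (by omega) hqd
      set β := u.factorization q with hβdef
      have hdecomp : q ^ β * (u / q ^ β) = u := Nat.ordProj_mul_ordCompl_eq_self u q
      have hcop : Nat.Coprime (q ^ β) (u / q ^ β) :=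
        Nat.Coprime.pow_left β (Nat.coprime_ordCompl hq (by omega))
      have hcpos : 0 < u / q ^ β := Nat.ordCompl_pos q (by omega)
      have hqβpos : 0 < q ^ β := Nat.pow_pos hq.pos
      have hsplit := hmul _ _ hqβpos hcpos hcop
      rw [hdecomp] at hsplit
      rw [hsplit]
      apply mul_ne_zero
      · exact hdense q hq (hgood q hq hqd) β hβ
      · apply IH
        · apply Nat.div_lt_self (by omega)
          exact Nat.one_lt_pow (by omega) hq.one_lt
        · exact hcpos
        · intro r hr hrd
          exact hgood r hr (dvd_trans hrd (Nat.ordCompl_dvd u q))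

/-! ### the master identity -/

lemma master {k p p₀ e M : ℕ} {a : ℕ → ℂ} (hk : 2 ≤ k) (hp : p.Prime) (hp0 : p₀ ≤ p)
    (hpk : k < p) (hodd : p ≠ 2) (he : 1 ≤ e) (hpe : p ∣ k ^ e - 1)
    (hmul : IsMult a) (ha1 : a 1 = 1)
    (hdense : ∀ q : ℕ, q.Prime → p₀ ≤ q → ∀ b : ℕ, 0 < b → a (q ^ b) ≠ 0)
    (hM : Nat.Coprime M (p * Nat.factorial p₀)) (j : ℕ) :
    ∃ u φ : ℕ,
      a (V k e (p ^ j * M)) = a (p ^ j) * a u ∧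
      a (V k (e * (p ^ j * M)) p) = a p * a φ ∧
      a (V k e (p ^ (j + 1) * M)) = a (p ^ (j + 1)) * (a u * a φ) ∧
      a u ≠ 0 ∧ a φ ≠ 0 := by
  have hM1 : 1 ≤ M := M_pos hp hM
  obtain ⟨u, hu, hpu, hGu⟩ := exists_u hk hp hp0 hpk hodd he hpe hM j
  obtain ⟨φ, hφ, hpφ, hGφ⟩ := phi_good hk hp hp0 hpk hodd he hpe hM j
  have hcop : Nat.Coprime u φ := coprime_u_phi hk hp he j hu hφ hpu
  have hupos : 0 < u := by
    have hV : 0 < V k e (p ^ j * M) :=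
      V_pos (by omega) (Nat.mul_pos (Nat.one_le_pow j p hp.pos) hM1)
    rcases Nat.eq_zero_or_pos u with h0 | h1
    · rw [h0, mul_zero] at hu; omega
    · exact h1
  have hφpos : 0 < φ := by
    have hV : 0 < V k (e * (p ^ j * M)) p := V_pos (by omega) hp.pos
    rcases Nat.eq_zero_or_pos φ with h0 | h1
    · rw [h0, mul_zero] at hφ; omega
    · exact h1
  have hcpu : Nat.Coprime (p ^ j) u :=
    Nat.Coprime.pow_left j ((Nat.Prime.coprime_iff_not_dvd hp).mpr hpu)
  have hcpφ : Nat.Coprime p φ := (Nat.Prime.coprime_iff_not_dvd hp).mpr hpφ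
  have hpjpos : 0 < p ^ j := Nat.pow_pos hp.pos
  refine ⟨u, φ, ?_, ?_, ?_, ?_, ?_⟩
  · rw [hu]
    exact hmul _ _ hpjpos hupos hcpu
  · rw [hφ]
    exact hmul _ _ hp.pos hφpos hcpφ
  · have harg : p ^ (j + 1) * M = (p ^ j * M) * p := by ring
    have hVmul : V k e (p ^ (j + 1) * M) = p ^ (j + 1) * (u * φ) := by
      rw [harg, V_mul hk e he, hu, hφ]
      ring
    rw [hVmul]
    have hsplit : a (p ^ (j + 1) * (u * φ)) = a (p ^ (j + 1)) * a (u * φ) := by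
      apply hmul _ _ (Nat.pow_pos hp.pos) (by positivity)
      apply Nat.Coprime.pow_left (j + 1)
      apply Nat.Coprime.mul_right
      · exact (Nat.Prime.coprime_iff_not_dvd hp).mpr hpu
      · exact hcpφ
    rw [hsplit, hmul u φ hupos hφpos hcop]
  · exact a_ne_zero_of_good hmul ha1 hdense u hupos hGu
  · exact a_ne_zero_of_good hmul ha1 hdense φ hφpos hGφ

/-! ### matching lemmas -/

lemma modeq_sub_one {T n₁ n₂ : ℕ} (hcong : n₁ ≡ n₂ [MOD T]) (h1 : 1 ≤ n₁) (h2 : 1 ≤ n₂) :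
    n₁ - 1 ≡ n₂ - 1 [MOD T] := by
  apply Nat.ModEq.add_right_cancel' 1
  have e1 : n₁ - 1 + 1 = n₁ := by omega
  have e2 : n₂ - 1 + 1 = n₂ := by omega
  rw [e1, e2]
  exact hcong

lemma match_n {k : ℕ} {a : ℕ → ℂ} {S : Type} (s₀ : S) (δ : ℕ → S → S) (τ : S → ℂ)
    (hk : 2 ≤ k)
    (hA : ∀ u : List ℕ, IsWord k u → NoLeadZero u → a (valk k u) = τ (deltaW δ u s₀))
    {N T : ℕ} (hper : ∀ f : S → S, ∀ n, N ≤ n → f^[n + T] = f^[n])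
    {B n₁ n₂ : ℕ} (hB : 1 ≤ B) (hcong : n₁ ≡ n₂ [MOD T])
    (h1 : N + 1 ≤ n₁) (h2 : N + 1 ≤ n₂) :
    a (V k B n₁) = a (V k B n₂) := by
  have hrw1 : V k B n₁ = valk k (wordW B (n₁ - 1)) := by
    rw [valk_wordW k B (n₁ - 1) hB]
    congr 1
    omega
  have hrw2 : V k B n₂ = valk k (wordW B (n₂ - 1)) := by
    rw [valk_wordW k B (n₂ - 1) hB]
    congr 1
    omega
  rw [hrw1, hrw2, hA _ (isWord_wordW k B _ hk) (noLeadZero_wordW B _),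
    hA _ (isWord_wordW k B _ hk) (noLeadZero_wordW B _), deltaW_wordW, deltaW_wordW]
  have hit : (deltaW δ (blockW B))^[n₁ - 1] = (deltaW δ (blockW B))^[n₂ - 1] :=
    iterate_congr _ (hper _) (modeq_sub_one hcong (by omega) (by omega))
      (by omega) (by omega)
  rw [hit]

lemma match_B {k : ℕ} {a : ℕ → ℂ} {S : Type} (s₀ : S) (δ : ℕ → S → S) (τ : S → ℂ)
    (hk : 2 ≤ k)
    (hA : ∀ u : List ℕ, IsWord k u → NoLeadZero u → a (valk k u) = τ (deltaW δ u s₀))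
    {N T : ℕ} (hper : ∀ f : S → S, ∀ n, N ≤ n → f^[n + T] = f^[n])
    {B₁ B₂ n : ℕ} (hcong : B₁ ≡ B₂ [MOD T]) (hB1 : N + 1 ≤ B₁) (hB2 : N + 1 ≤ B₂)
    (hn : 1 ≤ n) :
    a (V k B₁ n) = a (V k B₂ n) := by
  have hrw1 : V k B₁ n = valk k (wordW B₁ (n - 1)) := by
    rw [valk_wordW k B₁ (n - 1) (by omega)]
    congr 1
    omega
  have hrw2 : V k B₂ n = valk k (wordW B₂ (n - 1)) := by
    rw [valk_wordW k B₂ (n - 1) (by omega)]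
    congr 1
    omega
  rw [hrw1, hrw2, hA _ (isWord_wordW k B₁ _ hk) (noLeadZero_wordW B₁ _),
    hA _ (isWord_wordW k B₂ _ hk) (noLeadZero_wordW B₂ _), deltaW_wordW, deltaW_wordW,
    deltaW_blockW, deltaW_blockW]
  have hit : (δ 0)^[B₁ - 1] = (δ 0)^[B₂ - 1] :=
    iterate_congr _ (hper _) (modeq_sub_one hcong (by omega) (by omega))
      (by omega) (by omega)
  rw [hit]

/-! ### construction of the auxiliary modulus m' -/

lemma exists_m' (T D r M₀ : ℕ) (hT : 0 < T) (hD : 0 < D)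
    (hr : ∀ ℓ : ℕ, ℓ.Prime → ℓ ∣ T → ℓ ∣ D → ¬ ℓ ∣ r) :
    ∃ m : ℕ, M₀ ≤ m ∧ m ≡ r [MOD T] ∧ Nat.Coprime m D := by
  classical
  set Mset := D.primeFactors.filter (fun ℓ => ¬ ℓ ∣ T) with hMset
  set Mm := ∏ ℓ ∈ Mset, ℓ with hMm
  have hMmpos : 0 < Mm := by
    apply Finset.prod_pos
    intro ℓ hℓ
    exact (Nat.prime_of_mem_primeFactors (Finset.mem_filter.mp hℓ).1).pos
  have hcop : Nat.Coprime T Mm := by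
    apply Nat.Coprime.prod_right
    intro ℓ hℓ
    rw [hMset, Finset.mem_filter] at hℓ
    have hprime : ℓ.Prime := Nat.prime_of_mem_primeFactors hℓ.1
    exact Nat.coprime_comm.mp ((Nat.Prime.coprime_iff_not_dvd hprime).mpr hℓ.2)
  obtain ⟨c, hc1, hc2⟩ := Nat.chineseRemainder hcop r 1
  set m := c + T * Mm * M₀ with hm
  have hmT : m ≡ r [MOD T] := by
    have h0 : T * Mm * M₀ ≡ 0 [MOD T] :=
      (Nat.modEq_zero_iff_dvd).mpr ⟨Mm * M₀, by ring⟩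
    have := (Nat.ModEq.refl c).add h0
    rw [add_zero] at this
    exact this.trans hc1
  have hmM : m ≡ 1 [MOD Mm] := by
    have h0 : T * Mm * M₀ ≡ 0 [MOD Mm] :=
      (Nat.modEq_zero_iff_dvd).mpr ⟨T * M₀, by ring⟩
    have := (Nat.ModEq.refl c).add h0
    rw [add_zero] at this
    exact this.trans hc2
  refine ⟨m, ?_, hmT, ?_⟩
  · have h1 : M₀ ≤ T * Mm * M₀ := Nat.le_mul_of_pos_left M₀ (Nat.mul_pos hT hMmpos)
    omega
  · by_contra hcon
    obtain ⟨ℓ, hℓp, hℓm, hℓD⟩ := Nat.Prime.not_coprime_iff_dvd.mp hcon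
    by_cases hT' : ℓ ∣ T
    · have hnr := hr ℓ hℓp hT' hℓD
      have hmr : m ≡ r [MOD ℓ] := Nat.ModEq.of_dvd hT' hmT
      have h0 : m ≡ 0 [MOD ℓ] := (Nat.modEq_zero_iff_dvd).mpr hℓm
      have : r ≡ 0 [MOD ℓ] := hmr.symm.trans h0
      exact hnr ((Nat.modEq_zero_iff_dvd).mp this)
    · have hmem : ℓ ∈ Mset := by
        rw [hMset, Finset.mem_filter]
        exact ⟨Nat.mem_primeFactors.mpr ⟨hℓp, hℓD, hD.ne'⟩, hT'⟩
      have hℓMm : ℓ ∣ Mm := Finset.dvd_prod_of_mem _ hmem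
      have hm1 : m ≡ 1 [MOD ℓ] := Nat.ModEq.of_dvd hℓMm hmM
      have h0 : m ≡ 0 [MOD ℓ] := (Nat.modEq_zero_iff_dvd).mpr hℓm
      have h1 : (1 : ℕ) ≡ 0 [MOD ℓ] := hm1.symm.trans h0
      have := (Nat.modEq_zero_iff_dvd).mp h1
      have := Nat.dvd_one.mp this
      have := hℓp.one_lt
      omega

/-- in the dense case, `a` is completely multiplicative at all
sufficiently large primes: `a(p^α) = a(p)^α ≠ 0`. -/
theorem stmt12 (k : ℕ) (hk : 2 ≤ k) (a : ℕ → ℂ)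
    (ha : IsAutomatic k a) (hmul : IsMult a)
    (hdense : ∃ p₀ : ℕ, ∀ p : ℕ, p.Prime → p₀ ≤ p → ∀ α : ℕ, 0 < α → a (p ^ α) ≠ 0) :
    ∃ p₂ : ℕ, ∀ p : ℕ, p.Prime → p₂ ≤ p → ∀ α : ℕ, 0 < α →
      a (p ^ α) = a p ^ α ∧ a (p ^ α) ≠ 0 := by
  classical
  obtain ⟨S, instS, s₀, δ, τ, hA⟩ := ha
  haveI : Fintype S := instS
  obtain ⟨p₀, hdense⟩ := hdense
  have ha1 : a 1 = 1 := by
    obtain ⟨q, hq1, hq2⟩ := Nat.exists_infinite_primes p₀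
    have hq0 : a q ≠ 0 := by
      have := hdense q hq2 hq1 1 one_pos
      simpa using this
    have h := hmul q 1 hq2.pos one_pos (Nat.coprime_one_right q)
    rw [mul_one] at h
    have h2 : a q * 1 = a q * a 1 := by rw [mul_one]; exact h
    exact (mul_left_cancel₀ hq0 h2).symm
  obtain ⟨N, T, hT, hper⟩ := exists_period S
  refine ⟨p₀ + k + T + N + 3, ?_⟩
  intro p hp hpge α hα
  have hp0 : p₀ ≤ p := by omega
  have hpk : k < p := by omega
  have hpT : T < p := by omega
  have hpN : N + 1 ≤ p := by omega
  have hodd : p ≠ 2 := by omega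
  haveI : Fact p.Prime := ⟨hp⟩
  have hpk' : ¬ p ∣ k := by
    intro hcon
    have := Nat.le_of_dvd (by omega) hcon
    omega
  have hknz : ((k : ZMod p)) ≠ 0 := by
    rw [Ne, ZMod.natCast_eq_zero_iff]
    exact hpk'
  set e := orderOf ((k : ZMod p)) with hedef
  have hfin : IsOfFinOrder ((k : ZMod p)) :=
    isOfFinOrder_iff_pow_eq_one.mpr ⟨p - 1, by have := hp.two_le; omega,
      ZMod.pow_card_sub_one_eq_one hknz⟩
  have he : 1 ≤ e := orderOf_pos_iff.mpr hfin
  have hpe : p ∣ k ^ e - 1 :=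
    (cast_pow_sub_one_eq_zero_iff p k e hp.pos (by omega)).mpr (pow_orderOf_eq_one _)
  have key : ∀ β : ℕ, 1 ≤ β → a (p ^ (β + 1)) = a (p ^ β) * a p := by
    intro β hβ
    have hr : ∀ ℓ : ℕ, ℓ.Prime → ℓ ∣ T → ℓ ∣ p * Nat.factorial p₀ → ¬ ℓ ∣ p ^ β := by
      intro ℓ hℓ hℓT hℓD hcon
      have hℓp : ℓ ∣ p := hℓ.dvd_of_dvd_pow hcon
      have hℓeq : ℓ = p := (Nat.prime_dvd_prime_iff_eq hℓ hp).mp hℓp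
      rw [hℓeq] at hℓT
      have := Nat.le_of_dvd hT hℓT
      omega
    have hDpos : 0 < p * Nat.factorial p₀ :=
      Nat.mul_pos hp.pos (Nat.factorial_pos p₀)
    obtain ⟨m', hm'N, hm'cong, hm'cop⟩ :=
      exists_m' T (p * Nat.factorial p₀) (p ^ β) (N + 1) hT hDpos hr
    obtain ⟨u, φ, hXβ, hY, hX', hu0, hφ0⟩ :=
      master (M := 1) hk hp hp0 hpk hodd he hpe hmul ha1 hdense
        (Nat.coprime_one_left _) β
    obtain ⟨u', φ', hX0', hY0', hX1', hu0', hφ0'⟩ :=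
      master (M := m') hk hp hp0 hpk hodd he hpe hmul ha1 hdense hm'cop 0
    simp only [mul_one] at hXβ hY hX'
    simp only [pow_zero, one_mul, zero_add, pow_one] at hX0' hY0' hX1'
    rw [ha1, one_mul] at hX0'
    have hm1 : N + 1 ≤ m' := hm'N
    have hpβ : N + 1 ≤ p ^ β := le_trans hpN (Nat.le_self_pow (by omega) p)
    have hpβ1 : N + 1 ≤ p ^ (β + 1) := le_trans hpN (Nat.le_self_pow (by omega) p)
    have hpm' : N + 1 ≤ p * m' := le_trans hm1 (Nat.le_mul_of_pos_left m' hp.pos)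
    have hcong1 : p * m' ≡ p ^ (β + 1) [MOD T] := by
      have h := Nat.ModEq.mul_left p hm'cong
      calc p * m' ≡ p * p ^ β [MOD T] := h
      _ = p ^ (β + 1) := by rw [pow_succ]; ring
    have match1 : a (V k e (p * m')) = a (V k e (p ^ (β + 1))) :=
      match_n s₀ δ τ hk hA hper he hcong1 hpm' hpβ1
    have match2 : a (V k e m') = a (V k e (p ^ β)) :=
      match_n s₀ δ τ hk hA hper he hm'cong hm1 hpβ
    have hcongB : e * m' ≡ e * p ^ β [MOD T] := Nat.ModEq.mul_left e hm'cong
    have hem : N + 1 ≤ e * m' := le_trans hm1 (Nat.le_mul_of_pos_left m' he)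
    have hepβ : N + 1 ≤ e * p ^ β := le_trans hpβ (Nat.le_mul_of_pos_left _ he)
    have match3 : a (V k (e * m') p) = a (V k (e * p ^ β) p) :=
      match_B s₀ δ τ hk hA hper hcongB hem hepβ hp.pos
    have hEright : a (V k e (p * m')) = a (V k e m') * a (V k (e * m') p) := by
      rw [hX1', hX0', hY0']
      ring
    have hchain : a (p ^ (β + 1)) * (a u * a φ)
        = (a (p ^ β) * a p) * (a u * a φ) := by
      calc a (p ^ (β + 1)) * (a u * a φ) = a (V k e (p ^ (β + 1))) := hX'.symm
      _ = a (V k e (p * m')) := match1.symm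
      _ = a (V k e m') * a (V k (e * m') p) := hEright
      _ = a (V k e (p ^ β)) * a (V k (e * p ^ β) p) := by rw [match2, match3]
      _ = (a (p ^ β) * a u) * (a p * a φ) := by rw [hXβ, hY]
      _ = (a (p ^ β) * a p) * (a u * a φ) := by ring
    exact mul_right_cancel₀ (mul_ne_zero hu0 hφ0) hchain
  have main : ∀ α : ℕ, 1 ≤ α → a (p ^ α) = a p ^ α := by
    intro α hα
    induction α with
    | zero => omega
    | succ n ih =>
      rcases Nat.eq_zero_or_pos n with h0 | h1
      · rw [h0]
        simp
      · rw [key n h1, ih h1, pow_succ]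
  exact ⟨main α hα, hdense p hp hp0 α hα⟩

end MultAuto
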